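/- A group that is an extension of a cm-slender group by a cm-slender group is cm-slender. That is, if 1 → K → G → Q → 1 is a short exact sequence of groups with K and Q cm-slender, then G is cm-slender. -/

import Mathlib

universe u

/-- A group `G` is cm-slender if every group homomorphism from a completely
metrizable topological group to `G` has open kernel. -/
def IsCMSlender (G : Type*) [Group G] : Prop :=
  ∀ (H : Type u) [Group H] [tH : TopologicalSpace H] [IsTopologicalGroup H],
    (∃ mH : MetricSpace H,
      mH.toUniformSpace.toTopologicalSpace = tH ∧ @CompleteSpace H mH.toUniformSpace) →
    ∀ φ : H →* G, IsOpen ((φ : H → G) ⁻¹' {1})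

/-- An extension of a cm-slender group by a cm-slender group is cm-slender. -/
theorem isCMSlender_of_extension
    {K G Q : Type*} [Group K] [Group G] [Group Q]
    (ι : K →* G) (q : G →* Q)
    (hι : Function.Injective ι) (hq : Function.Surjective q)
    (hexact : ι.range = q.ker)
    (hK : IsCMSlender.{u} K) (hQ : IsCMSlender.{u} Q) :
    IsCMSlender.{u} G := by
  intro H _ tH _ hm φ
  obtain ⟨mH, htop, hcomp⟩ := hm
  subst htop
  letI : MetricSpace H := mH
  letI : CompleteSpace H := hcomp
  -- the kernel of q ∘ φ is open
  have hN : IsOpen (((q.comp φ) : H → Q) ⁻¹' {1}) :=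
    hQ H ⟨mH, rfl, hcomp⟩ (q.comp φ)
  set N : Subgroup H := (q.comp φ).ker with hNdef
  have hNopen : IsOpen (N : Set H) := by
    rw [hNdef, MonoidHom.coe_ker]; exact hN
  have hNclosed : IsClosed (N : Set H) := N.isClosed_of_isOpen hNopen
  haveI : CompleteSpace N := hNclosed.completeSpace_coe
  -- φ restricted to N lands in the range of ι
  have hmem : ∀ n : N, φ (n : H) ∈ ι.range := by
    intro n
    rw [hexact, MonoidHom.mem_ker]
    exact n.2
  let ψ : N →* K :=
    (MonoidHom.ofInjective hι).symm.toMonoidHom.comp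
      ((φ.comp N.subtype).codRestrict ι.range hmem)
  have hψ : ∀ n : N, ι (ψ n) = φ (n : H) := by
    intro n
    have : (MonoidHom.ofInjective hι) (ψ n) = ⟨φ (n : H), hmem n⟩ := by
      simp [ψ]; rfl
    have := congrArg (Subtype.val) this
    simpa [MonoidHom.ofInjective_apply] using this
  have hψker : IsOpen ((ψ : N → K) ⁻¹' {1}) := by
    refine hK N ⟨Subtype.metricSpace, ?_, ‹CompleteSpace N›⟩ ψ
    rfl
  have hkey : ((φ : H → G) ⁻¹' {1}) = Subtype.val '' ((ψ : N → K) ⁻¹' {1}) := by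
    ext h
    constructor
    · intro hh
      have hh' : φ h = 1 := hh
      have hhN : h ∈ N := by
        simp [hNdef, MonoidHom.mem_ker, hh']
      refine ⟨⟨h, hhN⟩, ?_, rfl⟩
      have : ι (ψ ⟨h, hhN⟩) = 1 := by rw [hψ]; exact hh'
      have : ψ ⟨h, hhN⟩ = 1 := hι (by simpa using this)
      simpa using this
    · rintro ⟨n, hn, rfl⟩
      have hn' : ψ n = 1 := hn
      have : φ (n : H) = 1 := by rw [← hψ, hn', map_one]
      simpa using this
  rw [hkey]
  exact hNopen.isOpenMap_subtype_val _ hψker
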